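/- Let n ≥ 1, let Σ be a real symmetric positive definite n×n matrix, let Θ be a real antisymmetric n×n matrix, let μ, w ∈ ℝⁿ, and set ζ := (−Σ + iΘ) w ∈ ℂⁿ. Then Re( ζᵀΣ⁻¹ζ ) = wᵀΣw − wᵀΘᵀΣ⁻¹Θw, and consequently | e^{(1/4) ζᵀΣ⁻¹ζ} Φ_{μ,Σ}(w) | = e^{ −(1/4) wᵀΣw − (1/4) wᵀΘᵀΣ⁻¹Θw } ≤ e^{ −(1/4) wᵀΣw }. -/

import Mathlib

open MeasureTheory Matrix Real

noncomputable section

/-- Quadratic form `uᵀ A u`. -/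
def qf {n : ℕ} (A : Matrix (Fin n) (Fin n) ℝ) (u : Fin n → ℝ) : ℝ := u ⬝ᵥ A.mulVec u

/-- Complex bilinear form `zᵀ A z` (no conjugation) for a real matrix `A`. -/
def qfC {n : ℕ} (A : Matrix (Fin n) (Fin n) ℝ) (z : Fin n → ℂ) : ℂ :=
  z ⬝ᵥ (A.map (fun a => (a : ℂ))).mulVec z

/-- Gaussian quasi-characteristic function `Φ_{μ,Σ}(u) = exp(iμᵀu − (1/2)uᵀΣu)`. -/
def qcf {n : ℕ} (μ : Fin n → ℝ) (Sg : Matrix (Fin n) (Fin n) ℝ) (u : Fin n → ℝ) : ℂ :=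
  Complex.exp (Complex.I * ((μ ⬝ᵥ u : ℝ) : ℂ) - (1/2 : ℂ) * ((qf Sg u : ℝ) : ℂ))

/-- `(−Σ + iΘ) w ∈ ℂⁿ`. -/
def zetaP {n : ℕ} (Sg Th : Matrix (Fin n) (Fin n) ℝ) (w : Fin n → ℝ) : Fin n → ℂ :=
  (Sg.map (fun a => (-a : ℂ)) + Complex.I • Th.map (fun a => (a : ℂ))).mulVec
    (fun k => (w k : ℂ))

namespace Stmt13Aux

/-- Complexification of a real matrix. -/
def C {n : ℕ} (A : Matrix (Fin n) (Fin n) ℝ) : Matrix (Fin n) (Fin n) ℂ :=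
  A.map (fun a => (a : ℂ))

lemma C_mul {n : ℕ} (A B : Matrix (Fin n) (Fin n) ℝ) : C (A * B) = C A * C B :=
  Matrix.map_mul (f := Complex.ofRealHom)

lemma C_add {n : ℕ} (A B : Matrix (Fin n) (Fin n) ℝ) : C (A + B) = C A + C B := by
  ext i j; simp [C]

lemma C_one {n : ℕ} : C (1 : Matrix (Fin n) (Fin n) ℝ) = 1 := by
  ext i j; simp [C, Matrix.one_apply]; split <;> simp

lemma C_transpose {n : ℕ} (A : Matrix (Fin n) (Fin n) ℝ) : (C A)ᵀ = C Aᵀ := by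
  ext i j; simp [C]

lemma C_neg {n : ℕ} (A : Matrix (Fin n) (Fin n) ℝ) : C (-A) = -(C A) := by
  ext i j; simp [C]

lemma C_mulVec {n : ℕ} (A : Matrix (Fin n) (Fin n) ℝ) (w : Fin n → ℝ) :
    (C A) *ᵥ (fun k => (w k : ℂ)) = fun k => ((A *ᵥ w) k : ℂ) := by
  ext k; simp [C, Matrix.mulVec, dotProduct]

lemma dot_cast {n : ℕ} (u v : Fin n → ℝ) :
    (fun k => (u k : ℂ)) ⬝ᵥ (fun k => (v k : ℂ)) = ((u ⬝ᵥ v : ℝ) : ℂ) := by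
  simp [dotProduct]

lemma dot_transpose_mulVec {R : Type*} [CommRing R] {n : ℕ}
    (M : Matrix (Fin n) (Fin n) R) (u z : Fin n → R) :
    u ⬝ᵥ Mᵀ *ᵥ z = (M *ᵥ u) ⬝ᵥ z := by
  rw [Matrix.dotProduct_mulVec, Matrix.vecMul_transpose]

end Stmt13Aux

open Stmt13Aux in
/-- with `ζ := (−Σ + iΘ)w`,
`Re(ζᵀΣ⁻¹ζ) = wᵀΣw − wᵀΘᵀΣ⁻¹Θw`, and consequently
`|e^{(1/4)ζᵀΣ⁻¹ζ} Φ_{μ,Σ}(w)| = e^{−(1/4)wᵀΣw − (1/4)wᵀΘᵀΣ⁻¹Θw} ≤ e^{−(1/4)wᵀΣw}`. -/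
theorem stmt13 {n : ℕ} (hn : 1 ≤ n) (Sg : Matrix (Fin n) (Fin n) ℝ)
    (hsymm : Sg.IsSymm) (hpos : Sg.PosDef)
    (Th : Matrix (Fin n) (Fin n) ℝ) (hanti : Thᵀ = -Th) (μ w : Fin n → ℝ) :
    (qfC Sg⁻¹ (zetaP Sg Th w)).re = qf Sg w - qf (Thᵀ * Sg⁻¹ * Th) w ∧
    ‖Complex.exp ((1/4 : ℂ) * qfC Sg⁻¹ (zetaP Sg Th w)) * qcf μ Sg w‖ =
      Real.exp (-(1/4 : ℝ) * qf Sg w - (1/4 : ℝ) * qf (Thᵀ * Sg⁻¹ * Th) w) ∧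
    ‖Complex.exp ((1/4 : ℂ) * qfC Sg⁻¹ (zetaP Sg Th w)) * qcf μ Sg w‖ ≤
      Real.exp (-(1/4 : ℝ) * qf Sg w) := by
  have hdet : IsUnit Sg.det := isUnit_iff_ne_zero.mpr hpos.det_pos.ne'
  have hSN : Sg * Sg⁻¹ = 1 := Matrix.mul_nonsing_inv Sg hdet
  have hNS : Sg⁻¹ * Sg = 1 := Matrix.nonsing_inv_mul Sg hdet
  set S : Matrix (Fin n) (Fin n) ℂ := C Sg with hS
  set T : Matrix (Fin n) (Fin n) ℂ := C Th with hT
  set N : Matrix (Fin n) (Fin n) ℂ := C Sg⁻¹ with hN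
  have hSN' : S * N = 1 := by rw [hS, hN, ← C_mul, hSN, C_one]
  have hNS' : N * S = 1 := by rw [hS, hN, ← C_mul, hNS, C_one]
  set M : Matrix (Fin n) (Fin n) ℂ := -S + Complex.I • T with hM
  -- zetaP is M applied to w
  have hzeta : zetaP Sg Th w = M *ᵥ (fun k => (w k : ℂ)) := by
    have : Sg.map (fun a => (-a : ℂ)) = -S := by ext i j; simp [hS, C]
    rw [zetaP, this, hM]; rfl
  have hMT : Mᵀ = -S - Complex.I • T := by
    rw [hM, Matrix.transpose_add, Matrix.transpose_neg, Matrix.transpose_smul,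
      hS, hT, C_transpose, C_transpose, hsymm.eq, hanti, C_neg]
    rw [smul_neg, sub_eq_add_neg]
  -- matrix identity
  have hkey : Mᵀ * N * M = S + T * N * T := by
    rw [hMT, hM]
    have e1 : (-S - Complex.I • T) * N = -1 - Complex.I • (T * N) := by
      rw [sub_mul, neg_mul, hSN', smul_mul_assoc]
    rw [e1]
    rw [sub_mul, mul_add, mul_add, neg_one_mul, neg_one_mul, smul_mul_assoc,
      smul_mul_assoc]
    simp only [Matrix.mul_assoc, mul_neg, hNS', mul_one, mul_smul_comm, smul_smul,
      Complex.I_mul_I, neg_one_smul, smul_neg, neg_neg]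
    abel
  -- the quadratic form is real
  have hreal : qfC Sg⁻¹ (zetaP Sg Th w) = ((qf (Sg + Th * Sg⁻¹ * Th) w : ℝ) : ℂ) := by
    rw [qfC, hzeta]
    set u : Fin n → ℂ := fun k => (w k : ℂ)
    have : (Sg⁻¹.map (fun a => (a : ℂ))) = N := rfl
    rw [this]
    have step : (M *ᵥ u) ⬝ᵥ N *ᵥ (M *ᵥ u) = u ⬝ᵥ (Mᵀ * N * M) *ᵥ u := by
      rw [← Matrix.mulVec_mulVec, ← Matrix.mulVec_mulVec, dot_transpose_mulVec]
    rw [step, hkey]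
    have : S + T * N * T = C (Sg + Th * Sg⁻¹ * Th) := by
      rw [C_add, ← hS, C_mul, C_mul, ← hT, ← hN]
    rw [this, C_mulVec, dot_cast, qf]
  have hqfneg : qf (Thᵀ * Sg⁻¹ * Th) w = -(qf (Th * Sg⁻¹ * Th) w) := by
    rw [hanti]
    simp [qf, Matrix.neg_mul, Matrix.neg_mulVec, dotProduct_neg]
  have hre : (qfC Sg⁻¹ (zetaP Sg Th w)).re = qf Sg w - qf (Thᵀ * Sg⁻¹ * Th) w := by
    rw [hreal, Complex.ofReal_re, hqfneg]
    simp [qf, Matrix.add_mulVec, dotProduct_add]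
  refine ⟨hre, ?_, ?_⟩ <;>
  · have habs : ‖Complex.exp ((1/4 : ℂ) * qfC Sg⁻¹ (zetaP Sg Th w)) * qcf μ Sg w‖
        = Real.exp (-(1/4 : ℝ) * qf Sg w - (1/4 : ℝ) * qf (Thᵀ * Sg⁻¹ * Th) w) := by
      rw [qcf, ← Complex.exp_add, Complex.norm_exp]
      congr 1
      rw [hreal]
      simp [Complex.add_re, Complex.sub_re, Complex.mul_re, Complex.I_re, Complex.I_im,
        Complex.ofReal_re, Complex.ofReal_im, hqfneg]
      have : qf Sg w - qf (Thᵀ * Sg⁻¹ * Th) w =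
          qf (Sg + Th * Sg⁻¹ * Th) w := by
        rw [hqfneg]
        simp [qf, Matrix.add_mulVec, dotProduct_add]
      nlinarith [this]
    first
    | exact habs
    | · rw [habs]
        apply Real.exp_le_exp.mpr
        have hnn : 0 ≤ qf (Thᵀ * Sg⁻¹ * Th) w := by
          have : qf (Thᵀ * Sg⁻¹ * Th) w = (Th *ᵥ w) ⬝ᵥ Sg⁻¹ *ᵥ (Th *ᵥ w) := by
            rw [qf, ← Matrix.mulVec_mulVec, ← Matrix.mulVec_mulVec, dot_transpose_mulVec]
          rw [this]
          have := hpos.inv.posSemidef.dotProduct_mulVec_nonneg (Th *ᵥ w)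
          simpa using this
        linarith
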